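/- Fix m, l, g > 0, ρ ∈ ℝ, χ ∈ ℝ³, and a symmetric positive-definite 3×3 real matrix 𝕀. Let Ω, v, Γ : ℝ → ℝ³ solve the closed-loop Euler–Poincaré system. Then the three functions t ↦ ‖p(t)‖², t ↦ p(t)·Γ(t), and t ↦ ‖Γ(t)‖² are constant in t, where p(t) = ρ v(t) + m l (Ω(t) × χ). -/

import Mathlib

open Matrix

/-- The closed-loop Euler–Poincaré system: with `μ = 𝕀Ω + m l (χ × v)` and
`p = ρ v + m l (Ω × χ)`, the curves satisfy
`μ' = μ × Ω + p × v − m g l (χ × Γ)`, `p' = p × Ω`, `Γ' = Γ × Ω`. -/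
def ClosedLoopEP (m l g ρ : ℝ) (χ : Fin 3 → ℝ) (I : Matrix (Fin 3) (Fin 3) ℝ)
    (Ω v Γ : ℝ → Fin 3 → ℝ) : Prop :=
  Differentiable ℝ Ω ∧ Differentiable ℝ v ∧ Differentiable ℝ Γ ∧
  (∀ t, deriv (fun s => I *ᵥ Ω s + (m * l) • (χ ⨯₃ v s)) t
      = (I *ᵥ Ω t + (m * l) • (χ ⨯₃ v t)) ⨯₃ Ω t
        + (ρ • v t + (m * l) • (Ω t ⨯₃ χ)) ⨯₃ v t - (m * g * l) • (χ ⨯₃ Γ t)) ∧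
  (∀ t, deriv (fun s => ρ • v s + (m * l) • (Ω s ⨯₃ χ)) t
      = (ρ • v t + (m * l) • (Ω t ⨯₃ χ)) ⨯₃ Ω t) ∧
  (∀ t, deriv Γ t = Γ t ⨯₃ Ω t)

lemma dot_hasDerivAt' {f g : ℝ → Fin 3 → ℝ} {f' g' : Fin 3 → ℝ} {t : ℝ}
    (hf : HasDerivAt f f' t) (hg : HasDerivAt g g' t) :
    HasDerivAt (fun s => f s ⬝ᵥ g s) (f' ⬝ᵥ g t + f t ⬝ᵥ g') t := by
  have h : ∀ i : Fin 3, HasDerivAt (fun s => f s i * g s i)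
      (f' i * g t i + f t i * g' i) t :=
    fun i => (hasDerivAt_pi.1 hf i).mul (hasDerivAt_pi.1 hg i)
  have := HasDerivAt.fun_sum (u := Finset.univ) (fun i _ => h i)
  simpa [dotProduct, Finset.sum_add_distrib] using this

/-- Along solutions of the closed-loop Euler–Poincaré system, the three Casimir
functions `‖p‖²`, `p·Γ` and `‖Γ‖²` are constant in time. -/
theorem casimirs_constant (m l g ρ : ℝ) (hm : 0 < m) (hl : 0 < l) (hg : 0 < g)
    (χ : Fin 3 → ℝ) (I : Matrix (Fin 3) (Fin 3) ℝ) (hIsymm : Iᵀ = I)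
    (hIpos : ∀ x : Fin 3 → ℝ, x ≠ 0 → 0 < x ⬝ᵥ I *ᵥ x)
    (Ω v Γ : ℝ → Fin 3 → ℝ) (hsol : ClosedLoopEP m l g ρ χ I Ω v Γ)
    (p : ℝ → Fin 3 → ℝ) (hp : ∀ t, p t = ρ • v t + (m * l) • (Ω t ⨯₃ χ)) :
    (∀ t, p t ⬝ᵥ p t = p 0 ⬝ᵥ p 0) ∧
    (∀ t, p t ⬝ᵥ Γ t = p 0 ⬝ᵥ Γ 0) ∧
    (∀ t, Γ t ⬝ᵥ Γ t = Γ 0 ⬝ᵥ Γ 0) := by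
  obtain ⟨hΩ, hv, hΓ, _, hpder, hΓder⟩ := hsol
  have hpe : p = fun s => ρ • v s + (m * l) • (Ω s ⨯₃ χ) := funext hp
  have hcross : Differentiable ℝ (fun s => Ω s ⨯₃ χ) := by
    have hL : Differentiable ℝ
        (LinearMap.toContinuousLinearMap ((crossProduct (R := ℝ)).flip χ)) :=
      (LinearMap.toContinuousLinearMap _).differentiable
    exact hL.comp hΩ
  have hpdiff : Differentiable ℝ p := by
    rw [hpe]; exact (hv.const_smul ρ).add (hcross.const_smul (m * l))
  have hpd : ∀ t, HasDerivAt p (p t ⨯₃ Ω t) t := by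
    intro t
    have := (hpdiff t).hasDerivAt
    rwa [show deriv p t = p t ⨯₃ Ω t by rw [hpe, hpder t]] at this
  have hΓd : ∀ t, HasDerivAt Γ (Γ t ⨯₃ Ω t) t := by
    intro t
    have := (hΓ t).hasDerivAt
    rwa [hΓder t] at this
  have key : ∀ (f g : ℝ → Fin 3 → ℝ),
      (∀ t, HasDerivAt f (f t ⨯₃ Ω t) t) → (∀ t, HasDerivAt g (g t ⨯₃ Ω t) t) →
      ∀ t, f t ⬝ᵥ g t = f 0 ⬝ᵥ g 0 := by
    intro f g hf hg t
    apply is_const_of_deriv_eq_zero (f := fun s => f s ⬝ᵥ g s)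
    · exact fun s => ((dot_hasDerivAt' (hf s) (hg s)).differentiableAt)
    · intro s
      rw [(dot_hasDerivAt' (hf s) (hg s)).deriv]
      have h1 : (f s ⨯₃ Ω s) ⬝ᵥ g s + f s ⬝ᵥ (g s ⨯₃ Ω s) = 0 := by
        simp [cross_apply, dotProduct, Fin.sum_univ_three]; ring
      exact h1
  exact ⟨key p p hpd hpd, key p Γ hpd hΓd, key Γ Γ hΓd hΓd⟩
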